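/- Let V and W be Euclidean Jordan algebras arising as systems in a monoidal operational PET with composite V ⊗ W. If {pᵢ} is a basis of atomic effects of V and {qⱼ} a basis of atomic effects of W, then the set {pᵢ ⊗ qⱼ} is linearly independent in V ⊗ W; hence dim(V ⊗ W) ≥ dim(V)·dim(W). -/

import Mathlib

/-- Let `V` and `W` be (the effect spaces of) Euclidean Jordan
algebras arising as systems of a monoidal operational PET, with composite
`T = V ⊗ W` and bilinear tensor `t : V → W → T`. Assume (context facts): for
every unital state `ω` on one factor there is a linear partial-evaluation map
`id ⊗ ω` (resp. `ω ⊗ id`) with `(id ⊗ ω)(v ⊗ w) = ω(w) • v`, and unital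
states order-separate effects in each finite-dimensional factor. If `{pᵢ}` is
a basis of atomic effects of `V` and `{qⱼ}` a basis of atomic effects of `W`,
then `{pᵢ ⊗ qⱼ}` is linearly independent in `T`; hence
`dim(V ⊗ W) ≥ dim V · dim W`. -/
theorem monoidal_opet_tensor_basis_linearIndependent
    {V W T : Type}
    [AddCommGroup V] [PartialOrder V] [Module ℝ V] [FiniteDimensional ℝ V]
    [AddCommGroup W] [PartialOrder W] [Module ℝ W] [FiniteDimensional ℝ W]
    [AddCommGroup T] [Module ℝ T] [FiniteDimensional ℝ T]
    (oneV : V) (oneW : W)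
    (t : V →ₗ[ℝ] W →ₗ[ℝ] T)
    (hsepV : ∀ v v' : V,
      (∀ ω : V →ₗ[ℝ] ℝ, (∀ u, 0 ≤ u → 0 ≤ ω u) → ω oneV = 1 → ω v ≤ ω v') → v ≤ v')
    (hsepW : ∀ w w' : W,
      (∀ ω : W →ₗ[ℝ] ℝ, (∀ u, 0 ≤ u → 0 ≤ ω u) → ω oneW = 1 → ω w ≤ ω w') → w ≤ w')
    (hpartialW : ∀ ω : W →ₗ[ℝ] ℝ, (∀ u, 0 ≤ u → 0 ≤ ω u) → ω oneW = 1 →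
      ∃ Φ : T →ₗ[ℝ] V, ∀ v w, Φ (t v w) = ω w • v)
    (hpartialV : ∀ ω : V →ₗ[ℝ] ℝ, (∀ u, 0 ≤ u → 0 ≤ ω u) → ω oneV = 1 →
      ∃ Φ : T →ₗ[ℝ] W, ∀ v w, Φ (t v w) = ω v • w)
    {m n : ℕ} (bV : Module.Basis (Fin m) ℝ V) (bW : Module.Basis (Fin n) ℝ W)
    (hAtomV : ∀ i, 0 ≤ bV i ∧ bV i ≤ oneV ∧ bV i ≠ 0 ∧
      ∀ q, 0 ≤ q → q ≤ bV i → ∃ c : ℝ, q = c • bV i)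
    (hAtomW : ∀ j, 0 ≤ bW j ∧ bW j ≤ oneW ∧ bW j ≠ 0 ∧
      ∀ q, 0 ≤ q → q ≤ bW j → ∃ c : ℝ, q = c • bW j) :
    LinearIndependent ℝ (fun ij : Fin m × Fin n => t (bV ij.1) (bW ij.2)) ∧
      Module.finrank ℝ V * Module.finrank ℝ W ≤ Module.finrank ℝ T := by

  have hLI : LinearIndependent ℝ (fun ij : Fin m × Fin n => t (bV ij.1) (bW ij.2)) := by
    rw [Fintype.linearIndependent_iff]
    intro g hg
    -- For each i, the element ∑ j, g (i,j) • bW j is zero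
    have hw : ∀ i : Fin m, (∑ j, g (i, j) • bW j) = 0 := by
      intro i
      have hzero : ∀ ω : W →ₗ[ℝ] ℝ, (∀ u, 0 ≤ u → 0 ≤ ω u) → ω oneW = 1 →
          ω (∑ j, g (i, j) • bW j) = 0 := by
        intro ω hpos hunit
        obtain ⟨Φ, hΦ⟩ := hpartialW ω hpos hunit
        have h1 : (∑ ij : Fin m × Fin n, g ij • (ω (bW ij.2) • bV ij.1)) = 0 := by
          have := congrArg Φ hg
          simpa [map_sum, map_smul, hΦ] using this
        have h2 : (∑ i' : Fin m, (∑ j, g (i', j) * ω (bW j)) • bV i') = 0 := by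
          rw [← h1, Fintype.sum_prod_type]
          congr 1
          ext i'
          rw [Finset.sum_smul]
          congr 1
          ext j
          rw [smul_smul]
        have h3 := (Fintype.linearIndependent_iff.mp bV.linearIndependent)
          (fun i' => ∑ j, g (i', j) * ω (bW j)) h2 i
        simpa [map_sum, map_smul, Finset.mul_sum, mul_comm] using h3
      have hle : (∑ j, g (i, j) • bW j) ≤ 0 := by
        apply hsepW
        intro ω hpos hunit
        rw [hzero ω hpos hunit, map_zero]
      have hge : (0 : W) ≤ (∑ j, g (i, j) • bW j) := by
        apply hsepW
        intro ω hpos hunit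
        rw [hzero ω hpos hunit, map_zero]
      exact le_antisymm hle hge
    rintro ⟨i, j⟩
    exact (Fintype.linearIndependent_iff.mp bW.linearIndependent)
      (fun j' => g (i, j')) (hw i) j
  refine ⟨hLI, ?_⟩
  have hV : Module.finrank ℝ V = m := Module.finrank_eq_card_basis bV ▸ by simp
  have hW : Module.finrank ℝ W = n := Module.finrank_eq_card_basis bW ▸ by simp
  calc Module.finrank ℝ V * Module.finrank ℝ W = m * n := by rw [hV, hW]
    _ = Fintype.card (Fin m × Fin n) := by simp
    _ ≤ Module.finrank ℝ T := hLI.fintype_card_le_finrank
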